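/- If G1 and G2 are quasi-monomial finite groups, then the direct product G1 × G2 is quasi-monomial. -/

import Mathlib

open scoped Classical

noncomputable section

/-- The usual inner product of complex-valued class functions on a finite group. -/
def charInner (G : Type) [Group G] [Finite G] (χ φ : G → ℂ) : ℂ :=
  (Nat.card G : ℂ)⁻¹ * ∑ᶠ g : G, χ g * (starRingEnd ℂ) (φ g)

/-- `χ` is an irreducible complex character of `G`, i.e. the character of a simple
finite-dimensional complex representation of `G`. -/
def IsIrreducibleChar (G : Type) [Group G] (χ : G → ℂ) : Prop :=
  ∃ V : FDRep ℂ G, CategoryTheory.Simple V ∧ χ = V.character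

/-- The character of `G` induced by a function `θ` on a subgroup `H ≤ G`:
`θ^G(g) = |H|⁻¹ ∑_{x ∈ G} θ⁰(x g x⁻¹)`. -/
def indChar {G : Type} [Group G] [Finite G] (H : Subgroup G) (θ : H → ℂ) : G → ℂ :=
  fun g => (Nat.card H : ℂ)⁻¹ *
    ∑ᶠ x : G, if h : x * g * x⁻¹ ∈ H then θ ⟨x * g * x⁻¹, h⟩ else 0

/-- `χ` is a constituent of `ψ`, i.e. `⟨ψ, χ⟩ ≠ 0` (for genuine characters this inner
product is a nonnegative integer, so this says `⟨ψ, χ⟩ > 0`). -/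
def IsConstituent (G : Type) [Group G] [Finite G] (ψ χ : G → ℂ) : Prop :=
  charInner G ψ χ ≠ 0

/-- A character `χ` of `G` is monomial if it is induced by a linear character (that is,
a monoid homomorphism to `ℂ`) of some subgroup `H ≤ G`. -/
def IsMonomialChar {G : Type} [Group G] [Finite G] (χ : G → ℂ) : Prop :=
  ∃ (H : Subgroup G) (lam : H →* ℂ), indChar H ⇑lam = χ

/-- A character `χ` of `G` is quasi-monomial if `λ^G = d·χ` for a linear character `λ` of
some subgroup `H ≤ G` and some positive integer `d`. -/
def IsQuasiMonomialChar {G : Type} [Group G] [Finite G] (χ : G → ℂ) : Prop :=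
  ∃ (H : Subgroup G) (lam : H →* ℂ) (d : ℕ), 0 < d ∧
    indChar H ⇑lam = fun g => (d : ℂ) * χ g

/-- A finite group is monomial if all its irreducible characters are monomial. -/
def IsMonomialGroup (G : Type) [Group G] [Finite G] : Prop :=
  ∀ χ : G → ℂ, IsIrreducibleChar G χ → IsMonomialChar χ

/-- A finite group is quasi-monomial if all its irreducible characters are quasi-monomial. -/
def IsQuasiMonomialGroup (G : Type) [Group G] [Finite G] : Prop :=
  ∀ χ : G → ℂ, IsIrreducibleChar G χ → IsQuasiMonomialChar χ

/-- A finite group `G` is almost monomial if for any two distinct irreducible characters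
`χ ≠ φ` of `G` there are a subgroup `H ≤ G` and a linear character `λ` of `H` such that
`χ` is a constituent of `λ^G` and `φ` is not. -/
def IsAlmostMonomialGroup (G : Type) [Group G] [Finite G] : Prop :=
  ∀ χ φ : G → ℂ, IsIrreducibleChar G χ → IsIrreducibleChar G φ → χ ≠ φ →
    ∃ (H : Subgroup G) (lam : H →* ℂ),
      IsConstituent G (indChar H ⇑lam) χ ∧ ¬ IsConstituent G (indChar H ⇑lam) φ

section Helpers
open CategoryTheory LinearMap Module

open CategoryTheory LinearMap Module

lemma schur_smul_id {G : Type} [Group G] (V : FDRep ℂ G) [Simple V] (f : V →ₗ[ℂ] V)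
    (hf : ∀ g : G, f ∘ₗ V.ρ g = V.ρ g ∘ₗ f) : ∃ c : ℂ, f = c • LinearMap.id := by
  let φ : V ⟶ V := ⟨ConcreteCategory.ofHom f, fun g => by ext v; exact congrFun (congrArg DFunLike.coe (hf g)) v⟩
  obtain ⟨c, hc⟩ := CategoryTheory.endomorphism_simple_eq_smul_id (𝕜 := ℂ) φ
  refine ⟨c, ?_⟩
  have := congrArg Action.Hom.hom hc
  rw [Action.smul_hom] at this
  ext v
  exact (congrFun (congrArg (fun h => DFunLike.coe h.hom.hom) this) v).symm

lemma exists_ne_zero {G : Type} [Group G] (V : FDRep ℂ G) [Simple V] : ∃ v : V, v ≠ 0 := by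
  by_contra h
  push_neg at h
  have : (𝟙 V : V ⟶ V) = 0 := by
    apply Action.hom_ext
    ext v
    simp [h v]
  exact CategoryTheory.id_nonzero V this

lemma char_one_ne_zero {G : Type} [Group G] (V : FDRep ℂ G) [Simple V] :
    V.character 1 ≠ 0 := by
  rw [FDRep.char_one]
  obtain ⟨v, hv⟩ := exists_ne_zero V
  have : 0 < finrank ℂ V := finrank_pos_iff.2 ⟨⟨v, 0, hv⟩⟩
  exact_mod_cast this.ne'

/-- Key scalar lemma: the "class sum" acts as a scalar on a simple rep. -/
lemma sum_conj_smul_id {G : Type} [Group G] [Fintype G] (V : FDRep ℂ G) [Simple V] (w : G) :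
    ∑ x : G, V.ρ (x * w * x⁻¹)
      = ((Fintype.card G : ℂ) * V.character w / V.character 1) • LinearMap.id := by
  set f : V →ₗ[ℂ] V := ∑ x : G, V.ρ (x * w * x⁻¹) with hfdef
  have hcomm : ∀ g : G, f ∘ₗ V.ρ g = V.ρ g ∘ₗ f := by
    intro g
    ext v
    simp only [hfdef, LinearMap.comp_apply, LinearMap.sum_apply, map_sum]
    refine Fintype.sum_equiv (Equiv.mulLeft g⁻¹) _ _ (fun x => ?_)
    simp only [Equiv.coe_mulLeft]
    rw [← Module.End.mul_apply, ← map_mul, ← Module.End.mul_apply (V.ρ g), ← map_mul]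
    congr 2
    group
  obtain ⟨c, hc⟩ := schur_smul_id V f hcomm
  have htr : LinearMap.trace ℂ V f = (Fintype.card G : ℂ) * V.character w := by
    rw [hfdef, map_sum]
    have heq : ∀ x : G, LinearMap.trace ℂ V (V.ρ (x * w * x⁻¹)) = V.character w := fun x =>
      FDRep.char_conj V w x
    rw [Finset.sum_congr rfl (fun x _ => heq x)]
    simp [mul_comm]
  have htr2 : LinearMap.trace ℂ V f = c * V.character 1 := by
    rw [hc, map_smul, trace_id, FDRep.char_one]
    simp [mul_comm]
  have hc1 : c = (Fintype.card G : ℂ) * V.character w / V.character 1 :=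
    (eq_div_iff (char_one_ne_zero V)).mpr (htr2.symm.trans htr)
  rw [hc, hc1]

/-- Restriction of a representation to an invariant subspace. -/
def subRepr {G : Type} [Group G] {W : Type} [AddCommGroup W] [Module ℂ W]
    (ρ : Representation ℂ G W) (U : Submodule ℂ W) (hU : ∀ g, ∀ v ∈ U, ρ g v ∈ U) :
    Representation ℂ G U where
  toFun g := (ρ g).restrict (hU g)
  map_one' := by ext v; simp [LinearMap.restrict_apply]
  map_mul' g h := by ext v; simp [LinearMap.restrict_apply]

lemma exists_simple_subrep {G : Type} [Group G] {W : Type} [AddCommGroup W] [Module ℂ W]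
    [FiniteDimensional ℂ W] (ρ : Representation ℂ G W) (hW : ∃ w : W, w ≠ 0) :
    ∃ (V₁ : FDRep ℂ G) (ι : V₁ →ₗ[ℂ] W), Simple V₁ ∧ Function.Injective ι ∧
      ∀ (g : G) (v : V₁), ι (V₁.ρ g v) = ρ g (ι v) := by
  obtain ⟨w₀, hw₀⟩ := hW
  have : Nontrivial W := nontrivial_of_ne w₀ 0 hw₀
  set P : Submodule ℂ W → Prop := fun p => p ≠ ⊥ ∧ ∀ g, ∀ v ∈ p, ρ g v ∈ p with hP
  have hs : {n | ∃ p, P p ∧ finrank ℂ p = n}.Nonempty :=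
    ⟨finrank ℂ (⊤ : Submodule ℂ W), ⊤, ⟨bot_ne_top.symm, fun g v _ => trivial⟩, rfl⟩
  obtain ⟨U, hPU, hrk⟩ := Nat.sInf_mem hs
  have hmin : ∀ p : Submodule ℂ W, P p → p ≤ U → p = U := by
    intro p hp hle
    refine Submodule.eq_of_le_of_finrank_le hle ?_
    rw [hrk]
    exact Nat.sInf_le ⟨p, hp, rfl⟩
  set V₁ : FDRep ℂ G := FDRep.of (subRepr ρ U hPU.2) with hV₁
  have hUnz : ∃ u : V₁, u ≠ 0 := by
    obtain ⟨u, hu, hune⟩ := Submodule.exists_mem_ne_zero_of_ne_bot hPU.1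
    exact ⟨⟨u, hu⟩, fun h => hune (congrArg Subtype.val h)⟩
  refine ⟨V₁, U.subtype, ?_, U.injective_subtype, fun g v => rfl⟩
  constructor
  intro Y f hmono
  constructor
  · -- IsIso f → f ≠ 0
    intro hiso hf0
    obtain ⟨u, hu⟩ := hUnz
    have h1 : (𝟙 V₁ : V₁ ⟶ V₁) = 0 := by
      apply (cancel_epi f).mp
      rw [hf0, Limits.comp_zero, Limits.zero_comp]
    have h2 := (congrArg Action.Hom.hom h1).symm
    rw [Action.zero_hom, Action.id_hom] at h2
    exact hu (by calc u = 𝟙 V₁.V u := rfl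
                    _ = (0 : V₁.V ⟶ V₁.V) u := by rw [← h2]
                    _ = 0 := rfl)
  · -- f ≠ 0 → IsIso f
    intro hf0
    set fl : Y →ₗ[ℂ] V₁ := f.hom.hom.hom with hfl
    have hcomm : ∀ (g : G) (y : Y), fl (Y.ρ g y) = V₁.ρ g (fl y) := by
      intro g y
      exact congrArg (fun h => h.hom.hom y) (f.comm g)
    -- injectivity
    have hinj : Function.Injective fl := by
      rw [← LinearMap.ker_eq_bot]
      by_contra hker
      have hKinv : ∀ g, ∀ v ∈ LinearMap.ker fl, Y.ρ g v ∈ LinearMap.ker fl := by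
        intro g v hv
        rw [LinearMap.mem_ker] at hv ⊢
        rw [hcomm g v, hv, map_zero]
      set Z : FDRep ℂ G := FDRep.of (subRepr Y.ρ (LinearMap.ker fl) hKinv) with hZ
      set ι' : Z ⟶ Y := ⟨(ConcreteCategory.ofHom (LinearMap.ker fl).subtype : Z.V ⟶ Y.V), fun g => by ext z; rfl⟩
        with hι'
      have hι'f : ι' ≫ f = 0 := by
        apply Action.hom_ext
        rw [Action.comp_hom, Action.zero_hom]
        ext z
        exact congrArg Subtype.val z.2
      have hz : ι' = 0 := by
        apply (cancel_mono f).mp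
        rw [hι'f, Limits.zero_comp]
      obtain ⟨k, hk, hkne⟩ := Submodule.exists_mem_ne_zero_of_ne_bot hker
      apply hkne
      have : (LinearMap.ker fl).subtype ⟨k, hk⟩ = k := rfl
      rw [← this]
      calc (LinearMap.ker fl).subtype ⟨k, hk⟩ = ι'.hom ⟨k, hk⟩ := rfl
        _ = (0 : Z ⟶ Y).hom ⟨k, hk⟩ := by rw [hz]
        _ = 0 := by rw [Action.zero_hom]; rfl
    -- surjectivity
    have hflne : ∃ y : Y, fl y ≠ 0 := by
      by_contra hall
      push_neg at hall
      apply hf0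
      apply Action.hom_ext
      rw [Action.zero_hom]
      ext y
      exact congrArg Subtype.val (hall y)
    have hsurj : Function.Surjective fl := by
      have hR : P ((LinearMap.range fl).map U.subtype) := by
        constructor
        · obtain ⟨y, hy⟩ := hflne
          intro hbot
          have hmem : U.subtype (fl y) ∈ (LinearMap.range fl).map U.subtype :=
            Submodule.mem_map_of_mem (LinearMap.mem_range_self fl y)
          rw [hbot, Submodule.mem_bot] at hmem
          exact hy (U.injective_subtype (by rw [hmem, map_zero]))
        · rintro g w hw
          rw [Submodule.mem_map] at hw ⊢
          obtain ⟨u', ⟨y, rfl⟩, rfl⟩ := hw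
          refine ⟨fl (Y.ρ g y), ⟨Y.ρ g y, rfl⟩, ?_⟩
          rw [hcomm g y]
          rfl
      have hRU : (LinearMap.range fl).map U.subtype = U :=
        hmin _ hR (Submodule.map_subtype_le U _)
      have : (LinearMap.range fl).map U.subtype = (⊤ : Submodule ℂ V₁).map U.subtype := by
        rw [hRU, Submodule.map_subtype_top]
      have := Submodule.map_injective_of_injective U.injective_subtype this
      exact LinearMap.range_eq_top.mp this
    -- build inverse
    let e : Y ≃ₗ[ℂ] V₁ := LinearEquiv.ofBijective fl ⟨hinj, hsurj⟩
    have he : ∀ y : Y, e y = fl y := fun y => rfl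
    have hsymm : ∀ (g : G) (u : V₁), e.symm (V₁.ρ g u) = Y.ρ g (e.symm u) := by
      intro g u
      apply hinj
      show fl _ = fl _
      rw [← he, e.apply_symm_apply, hcomm, ← he, e.apply_symm_apply]
    refine ⟨⟨⟨ConcreteCategory.ofHom (e.symm : V₁ →ₗ[ℂ] Y), fun g => ?_⟩, ?_, ?_⟩⟩
    · ext u
      show e.symm (V₁.ρ g u) = Y.ρ g (e.symm u)
      exact hsymm g u
    · apply Action.hom_ext
      rw [Action.comp_hom, Action.id_hom]
      ext y
      show e.symm (fl y) = y
      rw [← he, e.symm_apply_apply]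
    · apply Action.hom_ext
      rw [Action.comp_hom, Action.id_hom]
      ext u
      show ((fl (e.symm u) : V₁) : W) = (u : W)
      rw [← he, e.apply_symm_apply]

lemma char_prod_decomp {G₁ G₂ : Type} [Group G₁] [Group G₂] [Fintype G₁] [Fintype G₂]
    (V : FDRep ℂ (G₁ × G₂)) [Simple V] :
    ∃ (V₁ : FDRep ℂ G₁) (V₂ : FDRep ℂ G₂), Simple V₁ ∧ Simple V₂ ∧
      ∀ g : G₁ × G₂, V.character g = V₁.character g.1 * V₂.character g.2 := by
  obtain ⟨V₁, ι₁, hsim₁, hinj₁, hequi₁⟩ :=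
    exists_simple_subrep (V.ρ.comp (MonoidHom.inl G₁ G₂)) (exists_ne_zero V)
  obtain ⟨V₂, ι₂, hsim₂, hinj₂, hequi₂⟩ :=
    exists_simple_subrep (V.ρ.comp (MonoidHom.inr G₁ G₂)) (exists_ne_zero V)
  haveI := hsim₁; haveI := hsim₂
  -- the two "class sums"
  set z₁ : G₁ → (V →ₗ[ℂ] V) := fun w => ∑ x : G₁, V.ρ (x * w * x⁻¹, (1 : G₂)) with hz₁def
  set z₂ : G₂ → (V →ₗ[ℂ] V) := fun w => ∑ x : G₂, V.ρ ((1 : G₁), x * w * x⁻¹) with hz₂def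
  -- z₁ w is a scalar
  have hz₁ : ∀ w : G₁, z₁ w
      = ((Fintype.card G₁ : ℂ) * V₁.character w / V₁.character 1) • LinearMap.id := by
    intro w
    have hcomm : ∀ g : G₁ × G₂, z₁ w ∘ₗ V.ρ g = V.ρ g ∘ₗ z₁ w := by
      intro g
      ext v
      simp only [hz₁def, LinearMap.comp_apply, LinearMap.sum_apply, map_sum]
      refine Fintype.sum_equiv (Equiv.mulLeft g.1⁻¹) _ _ (fun x => ?_)
      simp only [Equiv.coe_mulLeft]
      rw [← Module.End.mul_apply, ← map_mul, ← Module.End.mul_apply (V.ρ g), ← map_mul]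
      congr 2
      refine Prod.ext ?_ ?_
      · show x * w * x⁻¹ * g.1 = g.1 * (g.1⁻¹ * x * w * (g.1⁻¹ * x)⁻¹)
        group
      · show (1 : G₂) * g.2 = g.2 * 1
        group
    obtain ⟨c, hc⟩ := schur_smul_id V (z₁ w) hcomm
    obtain ⟨v₀, hv₀⟩ := exists_ne_zero V₁
    have hval : z₁ w (ι₁ v₀)
        = ((Fintype.card G₁ : ℂ) * V₁.character w / V₁.character 1) • ι₁ v₀ := by
      have : z₁ w (ι₁ v₀) = ι₁ ((∑ x : G₁, V₁.ρ (x * w * x⁻¹)) v₀) := by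
        simp only [hz₁def, LinearMap.sum_apply, map_sum]
        refine Finset.sum_congr rfl (fun x _ => ?_)
        exact (hequi₁ (x * w * x⁻¹) v₀).symm
      rw [this, sum_conj_smul_id V₁ w]
      simp only [LinearMap.smul_apply, LinearMap.id_apply, map_smul]
    have hval2 : z₁ w (ι₁ v₀) = c • ι₁ v₀ := by
      rw [hc]; simp
    have hιv₀ : ι₁ v₀ ≠ 0 := fun h => hv₀ (hinj₁ (by rw [h, map_zero]))
    have hceq : c = (Fintype.card G₁ : ℂ) * V₁.character w / V₁.character 1 := by
      apply smul_left_injective ℂ hιv₀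
      show c • ι₁ v₀ = ((Fintype.card G₁ : ℂ) * V₁.character w / V₁.character 1) • ι₁ v₀
      rw [← hval2, hval]
    rw [hc, hceq]
  have hz₂ : ∀ w : G₂, z₂ w
      = ((Fintype.card G₂ : ℂ) * V₂.character w / V₂.character 1) • LinearMap.id := by
    intro w
    have hcomm : ∀ g : G₁ × G₂, z₂ w ∘ₗ V.ρ g = V.ρ g ∘ₗ z₂ w := by
      intro g
      ext v
      simp only [hz₂def, LinearMap.comp_apply, LinearMap.sum_apply, map_sum]
      refine Fintype.sum_equiv (Equiv.mulLeft g.2⁻¹) _ _ (fun x => ?_)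
      simp only [Equiv.coe_mulLeft]
      rw [← Module.End.mul_apply, ← map_mul, ← Module.End.mul_apply (V.ρ g), ← map_mul]
      congr 2
      refine Prod.ext ?_ ?_
      · show (1 : G₁) * g.1 = g.1 * 1
        group
      · show x * w * x⁻¹ * g.2 = g.2 * (g.2⁻¹ * x * w * (g.2⁻¹ * x)⁻¹)
        group
    obtain ⟨c, hc⟩ := schur_smul_id V (z₂ w) hcomm
    obtain ⟨v₀, hv₀⟩ := exists_ne_zero V₂
    have hval : z₂ w (ι₂ v₀)
        = ((Fintype.card G₂ : ℂ) * V₂.character w / V₂.character 1) • ι₂ v₀ := by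
      have : z₂ w (ι₂ v₀) = ι₂ ((∑ x : G₂, V₂.ρ (x * w * x⁻¹)) v₀) := by
        simp only [hz₂def, LinearMap.sum_apply, map_sum]
        refine Finset.sum_congr rfl (fun x _ => ?_)
        exact (hequi₂ (x * w * x⁻¹) v₀).symm
      rw [this, sum_conj_smul_id V₂ w]
      simp only [LinearMap.smul_apply, LinearMap.id_apply, map_smul]
    have hval2 : z₂ w (ι₂ v₀) = c • ι₂ v₀ := by
      rw [hc]; simp
    have hιv₀ : ι₂ v₀ ≠ 0 := fun h => hv₀ (hinj₂ (by rw [h, map_zero]))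
    have hceq : c = (Fintype.card G₂ : ℂ) * V₂.character w / V₂.character 1 := by
      apply smul_left_injective ℂ hιv₀
      show c • ι₂ v₀ = ((Fintype.card G₂ : ℂ) * V₂.character w / V₂.character 1) • ι₂ v₀
      rw [← hval2, hval]
    rw [hc, hceq]
  -- the product formula with ratio r
  set r : ℂ := V.character 1 / (V₁.character 1 * V₂.character 1) with hrdef
  have hcard1 : (Fintype.card G₁ : ℂ) ≠ 0 := Nat.cast_ne_zero.mpr Fintype.card_ne_zero
  have hcard2 : (Fintype.card G₂ : ℂ) ≠ 0 := Nat.cast_ne_zero.mpr Fintype.card_ne_zero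
  have hd1 : V₁.character 1 ≠ 0 := char_one_ne_zero V₁
  have hd2 : V₂.character 1 ≠ 0 := char_one_ne_zero V₂
  have hprod : ∀ g : G₁ × G₂,
      V.character g = r * (V₁.character g.1 * V₂.character g.2) := by
    intro g
    have htr1 : LinearMap.trace ℂ V (z₁ g.1 ∘ₗ z₂ g.2)
        = ((Fintype.card G₁ : ℂ) * V₁.character g.1 / V₁.character 1)
          * ((Fintype.card G₂ : ℂ) * V₂.character g.2 / V₂.character 1) * V.character 1 := by
      rw [hz₁ g.1, hz₂ g.2]
      simp only [LinearMap.smul_comp, LinearMap.comp_smul, LinearMap.id_comp]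
      rw [map_smul, map_smul, LinearMap.trace_id, smul_eq_mul, smul_eq_mul]
      simp only [FDRep.char_one]
      ring
    have htr2 : LinearMap.trace ℂ V (z₁ g.1 ∘ₗ z₂ g.2)
        = (Fintype.card G₁ : ℂ) * (Fintype.card G₂ : ℂ) * V.character g := by
      have hexp : z₁ g.1 ∘ₗ z₂ g.2
          = ∑ x : G₁, ∑ y : G₂, V.ρ ((x, y) * g * (x, y)⁻¹) := by
        simp only [hz₁def, hz₂def]
        rw [← Module.End.mul_eq_comp, Finset.sum_mul_sum]
        refine Finset.sum_congr rfl (fun x _ => Finset.sum_congr rfl (fun y _ => ?_))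
        rw [Module.End.mul_eq_comp, ← Module.End.mul_eq_comp, ← map_mul]
        congr 1
        refine Prod.ext ?_ ?_
        · show x * g.1 * x⁻¹ * 1 = x * g.1 * x⁻¹
          group
        · show 1 * (y * g.2 * y⁻¹) = y * g.2 * y⁻¹
          group
      rw [hexp, map_sum]
      have : ∀ x : G₁, ∑ y : G₂,
          LinearMap.trace ℂ V (V.ρ ((x, y) * g * (x, y)⁻¹)) = (Fintype.card G₂ : ℂ) * V.character g := by
        intro x
        have : ∀ y : G₂, LinearMap.trace ℂ V (V.ρ ((x, y) * g * (x, y)⁻¹)) = V.character g :=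
          fun y => FDRep.char_conj V g (x, y)
        rw [Finset.sum_congr rfl (fun y _ => this y)]
        simp [mul_comm]
      rw [Finset.sum_congr rfl (fun x _ => by rw [map_sum, this x])]
      simp only [Finset.sum_const, Finset.card_univ, nsmul_eq_mul]
      ring
    have h := htr2.symm.trans htr1
    apply mul_left_cancel₀ (mul_ne_zero hcard1 hcard2)
    rw [h, hrdef]
    field_simp
  -- orthonormality
  have horth : ∀ (H : Type) (instG : Group H) (instF : Fintype H) (W : FDRep ℂ H), Simple W →
      ∑ g : H, W.character g * W.character g⁻¹ = (Fintype.card H : ℂ) := by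
    intro H instG instF W hW
    haveI := hW
    letI : Invertible ((Nat.card H : ℂ)) :=
      invertibleOfNonzero (Nat.cast_ne_zero.mpr Nat.card_pos.ne')
    have horth : (Nat.card H : ℂ)⁻¹ * ∑ g : H, W.character g * W.character g⁻¹
        = if Nonempty (W ≅ W) then (1 : ℂ) else (0 : ℂ) :=
      FDRep.char_orthonormal (k := ℂ) W W
    rw [if_pos ⟨Iso.refl W⟩, Nat.card_eq_fintype_card] at horth
    have h3 := congrArg (fun z : ℂ => (Fintype.card H : ℂ) * z) horth
    rwa [← mul_assoc, mul_inv_cancel₀ (Nat.cast_ne_zero.mpr Fintype.card_ne_zero), one_mul,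
      mul_one] at h3
  have hnorm1 := horth G₁ inferInstance inferInstance V₁ hsim₁
  have hnorm2 := horth G₂ inferInstance inferInstance V₂ hsim₂
  have hnormV := horth (G₁ × G₂) inferInstance inferInstance V ‹Simple V›
  have hV' : ∑ g : G₁ × G₂, V.character g * V.character g⁻¹
      = (Fintype.card G₁ : ℂ) * (Fintype.card G₂ : ℂ) := by
    rw [hnormV, Fintype.card_prod]
    push_cast
    ring
  have hsplit : ∑ g : G₁ × G₂, V.character g * V.character g⁻¹
      = r ^ 2 * ((∑ a : G₁, V₁.character a * V₁.character a⁻¹)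
        * (∑ b : G₂, V₂.character b * V₂.character b⁻¹)) := by
    rw [Fintype.sum_prod_type]
    have hterm : ∀ a : G₁, ∀ b : G₂, V.character (a, b) * V.character (a, b)⁻¹
        = (r ^ 2 * (V₁.character a * V₁.character a⁻¹)) * (V₂.character b * V₂.character b⁻¹) := by
      intro a b
      have h1 := hprod (a, b)
      have h2 := hprod ((a, b)⁻¹)
      rw [h1, h2]
      show r * (V₁.character a * V₂.character b) * (r * (V₁.character a⁻¹ * V₂.character b⁻¹)) = _
      ring
    rw [Finset.sum_congr rfl (fun a _ => Finset.sum_congr rfl (fun b _ => hterm a b))]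
    rw [← Finset.sum_mul_sum, ← Finset.mul_sum]
    ring
  have hr2 : r ^ 2 = 1 := by
    have hcc : (Fintype.card G₁ : ℂ) * (Fintype.card G₂ : ℂ) ≠ 0 := mul_ne_zero hcard1 hcard2
    have hkey := hV'.symm.trans hsplit
    rw [hnorm1, hnorm2] at hkey
    have h1 : r ^ 2 * ((Fintype.card G₁ : ℂ) * (Fintype.card G₂ : ℂ))
        = 1 * ((Fintype.card G₁ : ℂ) * (Fintype.card G₂ : ℂ)) := by
      rw [one_mul, ← hkey]
    exact mul_right_cancel₀ hcc h1
  have hr : r = 1 := by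
    have hfac : (r - 1) * (r + 1) = 0 := by
      have h0 : r ^ 2 - 1 = 0 := by rw [hr2]; ring
      calc (r - 1) * (r + 1) = r ^ 2 - 1 := by ring
        _ = 0 := h0
    rcases mul_eq_zero.mp hfac with h | h
    · exact sub_eq_zero.mp h
    · have h : r = -1 := eq_neg_of_add_eq_zero_left h
      exfalso
      rw [hrdef, div_eq_iff (mul_ne_zero hd1 hd2)] at h
      rw [FDRep.char_one, FDRep.char_one, FDRep.char_one] at h
      have hzz : ((Module.finrank ℂ V + Module.finrank ℂ V₁ * Module.finrank ℂ V₂ : ℕ) : ℂ) = 0 := by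
        push_cast
        rw [h]
        ring
      have hz0 := Nat.cast_eq_zero.mp hzz
      obtain ⟨v, hv⟩ := exists_ne_zero V
      haveI : Nontrivial V := nontrivial_of_ne v 0 hv
      have := Module.finrank_pos (R := ℂ) (M := V)
      omega
  refine ⟨V₁, V₂, hsim₁, hsim₂, fun g => ?_⟩
  rw [hprod g, hr, one_mul]

variable {G₁ G₂ : Type} [Group G₁] [Group G₂]

/-- The product of two linear characters on the product subgroup. -/
def prodLam (H₁ : Subgroup G₁) (H₂ : Subgroup G₂) (lam₁ : H₁ →* ℂ) (lam₂ : H₂ →* ℂ) :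
    (H₁.prod H₂) →* ℂ :=
  ((lam₁.comp (MonoidHom.fst H₁ H₂)) * (lam₂.comp (MonoidHom.snd H₁ H₂))).comp
    (Subgroup.prodEquiv H₁ H₂).toMonoidHom

lemma prodLam_apply (H₁ : Subgroup G₁) (H₂ : Subgroup G₂) (lam₁ : H₁ →* ℂ) (lam₂ : H₂ →* ℂ)
    (x : H₁.prod H₂) (h1 : (x : G₁ × G₂).1 ∈ H₁) (h2 : (x : G₁ × G₂).2 ∈ H₂) :
    prodLam H₁ H₂ lam₁ lam₂ x = lam₁ ⟨(x : G₁ × G₂).1, h1⟩ * lam₂ ⟨(x : G₁ × G₂).2, h2⟩ :=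
  rfl

variable [Finite G₁] [Finite G₂]

lemma indChar_prod (H₁ : Subgroup G₁) (H₂ : Subgroup G₂) (lam₁ : H₁ →* ℂ) (lam₂ : H₂ →* ℂ)
    (g : G₁ × G₂) :
    indChar (H₁.prod H₂) ⇑(prodLam H₁ H₂ lam₁ lam₂) g
      = indChar H₁ ⇑lam₁ g.1 * indChar H₂ ⇑lam₂ g.2 := by
  letI : Fintype G₁ := Fintype.ofFinite _
  letI : Fintype G₂ := Fintype.ofFinite _
  unfold indChar
  rw [finsum_eq_sum_of_fintype, finsum_eq_sum_of_fintype, finsum_eq_sum_of_fintype]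
  have hsummand : ∀ x : G₁ × G₂,
      (if h : x * g * x⁻¹ ∈ H₁.prod H₂ then prodLam H₁ H₂ lam₁ lam₂ ⟨x * g * x⁻¹, h⟩ else 0)
      = (if h : x.1 * g.1 * x.1⁻¹ ∈ H₁ then lam₁ ⟨x.1 * g.1 * x.1⁻¹, h⟩ else 0)
        * (if h : x.2 * g.2 * x.2⁻¹ ∈ H₂ then lam₂ ⟨x.2 * g.2 * x.2⁻¹, h⟩ else 0) := by
    intro x
    by_cases h1 : x.1 * g.1 * x.1⁻¹ ∈ H₁ <;> by_cases h2 : x.2 * g.2 * x.2⁻¹ ∈ H₂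
    · rw [dif_pos h1, dif_pos h2, dif_pos (Subgroup.mem_prod.mpr ⟨h1, h2⟩)]
      rw [prodLam_apply _ _ _ _ _ h1 h2]; rfl
    · rw [dif_neg h2, mul_zero, dif_neg]
      intro h
      exact h2 (Subgroup.mem_prod.mp h).2
    · rw [dif_neg h1, zero_mul, dif_neg]
      intro h
      exact h1 (Subgroup.mem_prod.mp h).1
    · rw [dif_neg h1, zero_mul, dif_neg]
      intro h
      exact h1 (Subgroup.mem_prod.mp h).1
  rw [Finset.sum_congr rfl (fun x _ => hsummand x)]
  rw [Fintype.sum_prod_type]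
  have hfac : ∑ x₁ : G₁, ∑ x₂ : G₂,
      (if h : x₁ * g.1 * x₁⁻¹ ∈ H₁ then lam₁ ⟨x₁ * g.1 * x₁⁻¹, h⟩ else 0)
        * (if h : x₂ * g.2 * x₂⁻¹ ∈ H₂ then lam₂ ⟨x₂ * g.2 * x₂⁻¹, h⟩ else 0)
      = (∑ x₁ : G₁, if h : x₁ * g.1 * x₁⁻¹ ∈ H₁ then lam₁ ⟨x₁ * g.1 * x₁⁻¹, h⟩ else 0)
        * (∑ x₂ : G₂, if h : x₂ * g.2 * x₂⁻¹ ∈ H₂ then lam₂ ⟨x₂ * g.2 * x₂⁻¹, h⟩ else 0) := by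
    rw [Finset.sum_mul_sum]
  rw [hfac]
  have hcard : (Nat.card (H₁.prod H₂) : ℂ) = (Nat.card H₁ : ℂ) * (Nat.card H₂ : ℂ) := by
    rw [Nat.card_congr (Subgroup.prodEquiv H₁ H₂).toEquiv, Nat.card_prod]
    push_cast
    ring
  rw [hcard, mul_inv]
  ring

end Helpers

/-- If `G₁` and `G₂` are quasi-monomial finite groups, then `G₁ × G₂` is quasi-monomial. -/
theorem quasiMonomialGroup_prod (G₁ G₂ : Type) [Group G₁] [Group G₂] [Finite G₁] [Finite G₂]
    (h₁ : IsQuasiMonomialGroup G₁) (h₂ : IsQuasiMonomialGroup G₂) :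
    IsQuasiMonomialGroup (G₁ × G₂) := by
  intro χ hχ
  obtain ⟨V, hV, rfl⟩ := hχ
  haveI := hV
  letI : Fintype G₁ := Fintype.ofFinite _
  letI : Fintype G₂ := Fintype.ofFinite _
  obtain ⟨V₁, V₂, hsim₁, hsim₂, hprod⟩ := char_prod_decomp V
  obtain ⟨H₁, lam₁, d₁, hd₁, hind₁⟩ := h₁ V₁.character ⟨V₁, hsim₁, rfl⟩
  obtain ⟨H₂, lam₂, d₂, hd₂, hind₂⟩ := h₂ V₂.character ⟨V₂, hsim₂, rfl⟩
  refine ⟨H₁.prod H₂, prodLam H₁ H₂ lam₁ lam₂, d₁ * d₂, Nat.mul_pos hd₁ hd₂, ?_⟩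
  funext g
  rw [indChar_prod H₁ H₂ lam₁ lam₂ g, congrFun hind₁ g.1, congrFun hind₂ g.2, hprod g]
  push_cast
  ring
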